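/- For all x in the subspace S = {x ∈ ℝ^{nN} : x_1 + ... + x_N = 0}, one has sum_{(i,j)∈E} [p_{ij}/(L_i + L_j) · ((e_i - e_j)(L_i e_i^T - L_j e_j^T)) ⊗ I_n] x = x/(N-1), where p_{ij} = (1/L_i + 1/L_j)/((N-1) sum_{t=1}^N 1/L_t). -/

import Mathlib

open Matrix Kronecker

private lemma pair_sum {N : ℕ} (g : Fin N → Fin N → ℝ) (hdiag : ∀ i, g i i = 0) :
    ∑ q ∈ Finset.univ.filter (fun q : Fin N × Fin N => q.1 < q.2), (g q.1 q.2 + g q.2 q.1)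
      = ∑ i, ∑ j, g i j := by
  rw [Finset.sum_add_distrib]
  have h2 : ∑ q ∈ Finset.univ.filter (fun q : Fin N × Fin N => q.1 < q.2), g q.2 q.1
      = ∑ q ∈ Finset.univ.filter (fun q : Fin N × Fin N => ¬ q.1 < q.2), g q.1 q.2 := by
    rw [show (Finset.univ.filter (fun q : Fin N × Fin N => ¬ q.1 < q.2))
        = (Finset.univ.filter (fun q : Fin N × Fin N => q.2 < q.1)) ∪
          (Finset.univ.filter (fun q : Fin N × Fin N => q.1 = q.2)) by
      ext q
      simp only [Finset.mem_union, Finset.mem_filter, Finset.mem_univ, true_and]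
      omega]
    rw [Finset.sum_union (by
      rw [Finset.disjoint_filter]
      intro q _ h h'
      omega)]
    have h3 : ∑ q ∈ Finset.univ.filter (fun q : Fin N × Fin N => q.1 = q.2), g q.1 q.2 = 0 := by
      apply Finset.sum_eq_zero
      intro q hq
      simp only [Finset.mem_filter] at hq
      rw [hq.2]
      exact hdiag _
    rw [h3, add_zero]
    apply Finset.sum_nbij' (fun q => (q.2, q.1)) (fun q => (q.2, q.1)) <;> simp
  rw [h2, Finset.sum_filter_add_sum_filter_not, ← Finset.univ_product_univ,
    Finset.sum_product]

/-- For all `x ∈ S = {x : x_1 + ⋯ + x_N = 0}`,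
`∑_{(i,j)∈E} [p_{ij}/(L_i+L_j) ((e_i - e_j)(L_i e_iᵀ - L_j e_jᵀ)) ⊗ I_n] x = x/(N-1)`,
where `p_{ij} = (1/L_i + 1/L_j)/((N-1) ∑_t 1/L_t)`. -/
theorem matrix_identity_on_S (N n : ℕ) (hN : 2 ≤ N) (hn : 1 ≤ n)
    (L : Fin N → ℝ) (hL : ∀ i, 0 < L i)
    (x : Fin N × Fin n → ℝ) (hx : ∀ k : Fin n, ∑ i : Fin N, x (i, k) = 0) :
    Matrix.mulVec
      (∑ q ∈ Finset.univ.filter (fun q : Fin N × Fin N => q.1 < q.2),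
        (((1 / L q.1 + 1 / L q.2) / (((N : ℝ) - 1) * ∑ t, 1 / L t)) / (L q.1 + L q.2)) •
          ((Matrix.vecMulVec
              ((Pi.single q.1 1 : Fin N → ℝ) - (Pi.single q.2 1 : Fin N → ℝ))
              (L q.1 • (Pi.single q.1 1 : Fin N → ℝ) -
                L q.2 • (Pi.single q.2 1 : Fin N → ℝ))) ⊗ₖ
            (1 : Matrix (Fin n) (Fin n) ℝ)))
      x = (1 / ((N : ℝ) - 1)) • x := by
  have hS0 : (∑ t, 1 / L t) ≠ 0 := by
    have : (0:ℝ) < ∑ t, 1 / L t := by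
      apply Finset.sum_pos (fun t _ => div_pos one_pos (hL t))
      exact ⟨⟨0, by omega⟩, Finset.mem_univ _⟩
    linarith
  have hN1 : ((N:ℝ) - 1) ≠ 0 := by
    have : (2:ℝ) ≤ (N:ℝ) := by exact_mod_cast hN
    intro h; linarith
  funext p
  obtain ⟨a, k⟩ := p
  simp only [Matrix.mulVec, dotProduct, Finset.sum_apply, Matrix.sum_apply,
    Matrix.smul_apply, Matrix.kroneckerMap_apply, Matrix.vecMulVec_apply, Matrix.one_apply,
    Pi.sub_apply, Pi.smul_apply, Pi.single_apply, smul_eq_mul, Fintype.sum_prod_type]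
  simp only [Finset.sum_mul]
  simp only [Finset.sum_comm (γ := Fin n) (α := Fin N × Fin N) (β := ℝ)]
  simp only [Finset.sum_comm (γ := Fin N) (α := Fin N × Fin N) (β := ℝ)]
  set g : Fin N → Fin N → ℝ := fun i j => if a = i then
      ((1 / L i + 1 / L j) / (((N : ℝ) - 1) * ∑ t, 1 / L t) / (L i + L j)) *
        (L i * x (i, k) - L j * x (j, k)) else 0 with hg
  have hmain : ∑ q ∈ Finset.univ.filter (fun q : Fin N × Fin N => q.1 < q.2),
      (g q.1 q.2 + g q.2 q.1) = 1 / ((N : ℝ) - 1) * x (a, k) := by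
    rw [pair_sum g (fun i => by simp [hg])]
    rw [Finset.sum_comm]
    simp only [hg, Finset.sum_ite_eq, Finset.mem_univ, if_true]
    have hstep : ∀ j : Fin N,
        (1 / L a + 1 / L j) / (((N : ℝ) - 1) * ∑ t, 1 / L t) / (L a + L j) *
          (L a * x (a, k) - L j * x (j, k))
        = (1 / (((N : ℝ) - 1) * ∑ t, 1 / L t)) * (x (a, k) * (1 / L j))
          - (1 / (((N : ℝ) - 1) * ∑ t, 1 / L t)) * (x (j, k) * (1 / L a)) := by
      intro j
      have ha0 : L a ≠ 0 := (hL a).ne'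
      have hj0 : L j ≠ 0 := (hL j).ne'
      have haj : L a + L j ≠ 0 := by have := hL a; have := hL j; positivity
      field_simp
      ring
    rw [Finset.sum_congr rfl (fun j _ => hstep j)]
    rw [Finset.sum_sub_distrib]
    simp only [← Finset.mul_sum]
    have hx1 : ∑ j : Fin N, x (j, k) * (1 / L a) = 0 := by
      rw [← Finset.sum_mul, hx k, zero_mul]
    have hx2 : ∑ j : Fin N, x (a, k) * (1 / L j) = x (a, k) * ∑ t, 1 / L t := by
      rw [Finset.mul_sum]
    rw [hx1, mul_zero, sub_zero]
    field_simp
  rw [← hmain]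
  apply Finset.sum_congr rfl
  intro q hq
  have hne : q.1 ≠ q.2 := ne_of_lt (Finset.mem_filter.mp hq).2
  have hne' : q.2 ≠ q.1 := hne.symm
  simp only [hg, mul_ite, ite_mul, mul_zero, zero_mul, mul_one, one_mul, sub_mul, mul_sub,
    Finset.sum_sub_distrib, Finset.sum_ite_eq, Finset.sum_ite_eq', Finset.mem_univ, if_true]
  by_cases h1 : a = q.1 <;> by_cases h2 : a = q.2 <;> simp [h1, h2, hne, hne'] <;> ring
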